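/- Let −1 < p < 0 and let j_{p,1} be the first positive zero of the Bessel function J_p. For all x with 0 < |x| < j_{p,1}, the Turán-type inequality 𝓙_{p+1}(x)² − ((p+1)/(p+2))·𝓙_p(x)·𝓙_{p+2}(x) > 0 holds. -/

import Mathlib

open Real

noncomputable def besselJn (p x : ℝ) : ℝ :=
  ∑' n : ℕ, (-(1:ℝ)/4)^n * x^(2*n) / ((Real.Gamma (p+n+1) / Real.Gamma (p+1)) * n.factorial)

noncomputable def besselIn (p x : ℝ) : ℝ :=
  ∑' n : ℕ, ((1:ℝ)/4)^n * x^(2*n) / ((Real.Gamma (p+n+1) / Real.Gamma (p+1)) * n.factorial)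

noncomputable def besselJ (p x : ℝ) : ℝ :=
  ∑' n : ℕ, (-1:ℝ)^n * (x/2)^(p+2*n) / (n.factorial * Real.Gamma (p+n+1))

namespace TuranAux

/-- the `n`-th term (without sign) of the normalized Bessel series at `y = x^2/4`. -/
noncomputable def T (p y : ℝ) (n : ℕ) : ℝ :=
  y^n / ((Real.Gamma (p+n+1) / Real.Gamma (p+1)) * n.factorial)

variable {p y : ℝ}

lemma gamma_arg_pos (hp : -1 < p) (n : ℕ) : 0 < p + (n:ℝ) + 1 := by
  have : (0:ℝ) ≤ n := Nat.cast_nonneg n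
  linarith

lemma gamma_pos (hp : -1 < p) (n : ℕ) : 0 < Real.Gamma (p + (n:ℝ) + 1) :=
  Real.Gamma_pos_of_pos (gamma_arg_pos hp n)

lemma gamma1_pos (hp : -1 < p) : 0 < Real.Gamma (p + 1) := by
  simpa using gamma_pos hp 0

lemma T_eq (hp : -1 < p) (n : ℕ) :
    T p y n = y^n * Real.Gamma (p+1) / (Real.Gamma (p+n+1) * n.factorial) := by
  have h1 := (gamma_pos hp n).ne'
  have h2 := (gamma1_pos hp).ne'
  have h3 : (n.factorial : ℝ) ≠ 0 := by positivity
  unfold T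
  field_simp

lemma T_zero (hp : -1 < p) : T p y 0 = (1:ℝ) := by
  simp [T, div_self (gamma1_pos hp).ne']

lemma T_nonneg (hp : -1 < p) (hy : 0 ≤ y) (n : ℕ) : 0 ≤ T p y n := by
  have := gamma_pos hp n
  have := gamma1_pos hp
  have : (0:ℝ) < n.factorial := by positivity
  unfold T
  positivity

lemma T_succ (hp : -1 < p) (n : ℕ) :
    T p y (n+1) = T p y n * (y / ((p+n+1)*(n+1))) := by
  have hA := gamma_pos hp n
  have hG := gamma1_pos hp
  have harg := gamma_arg_pos hp n
  have hg : Real.Gamma (p + (n+1:ℕ) + 1) = (p + n + 1) * Real.Gamma (p + n + 1) := by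
    push_cast
    rw [show p + ((n:ℝ)+1) + 1 = (p + n + 1) + 1 by ring, Real.Gamma_add_one harg.ne']
  rw [T_eq hp, T_eq hp, hg]
  have hfac : ((n+1:ℕ).factorial : ℝ) = (n+1) * n.factorial := by
    rw [Nat.factorial_succ]; push_cast; ring
  rw [hfac]
  have hfn : (0:ℝ) < n.factorial := by positivity
  field_simp
  ring

lemma T_one (hp : -1 < p) : T p y 1 = y / (p+1) := by
  rw [show (1:ℕ) = 0 + 1 from rfl, T_succ hp 0, T_zero hp]
  norm_num

lemma T_anti (hp : -1 < p) (hy : 0 ≤ y) (hle : y ≤ p + 1) (n : ℕ) :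
    T p y (n+1) ≤ T p y n := by
  rw [T_succ hp n]
  have hTn := T_nonneg hp hy n
  have h1 : (0:ℝ) < p + n + 1 := gamma_arg_pos hp n
  have h2 : (0:ℝ) < (n:ℝ) + 1 := by positivity
  have hden : p + 1 ≤ (p+n+1) * (n+1) := by
    nlinarith [Nat.cast_nonneg (α := ℝ) n]
  have hratio : y / ((p+n+1)*(n+1)) ≤ 1 := by
    rw [div_le_one (by positivity)]
    linarith
  nlinarith [div_nonneg hy (le_of_lt (by positivity : (0:ℝ) < (p+n+1)*(n+1)))]

lemma T_summable (hp : -1 < p) (hy : 0 ≤ y) : Summable (T p y) := by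
  apply summable_of_ratio_norm_eventually_le (r := 1/2) (by norm_num)
  filter_upwards [Filter.eventually_ge_atTop (⌈2*y⌉₊ + 1)] with n hn
  have hn2 : 2*y ≤ (n:ℝ) := by
    calc 2*y ≤ (⌈2*y⌉₊ : ℝ) := Nat.le_ceil _
    _ ≤ n := by exact_mod_cast Nat.le_of_succ_le hn
  have h1 : (0:ℝ) < p + n + 1 := gamma_arg_pos hp n
  have h2 : (0:ℝ) < (n:ℝ) + 1 := by positivity
  have hden : (n:ℝ) ≤ (p+n+1)*(n+1) := by
    nlinarith [Nat.cast_nonneg (α := ℝ) n]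
  have hratio : y / ((p+n+1)*(n+1)) ≤ 1/2 := by
    rw [div_le_iff₀ (by positivity)]
    nlinarith
  have hTn := T_nonneg hp hy n
  have hT1 := T_nonneg hp hy (n+1)
  rw [Real.norm_eq_abs, Real.norm_eq_abs, abs_of_nonneg hT1, abs_of_nonneg hTn, T_succ hp n]
  have hrn : 0 ≤ y / ((p+n+1)*(n+1)) := div_nonneg hy (by positivity)
  nlinarith

lemma alt_summable (hp : -1 < p) (hy : 0 ≤ y) :
    Summable (fun n : ℕ => (-1:ℝ)^n * T p y n) := by
  apply Summable.of_norm
  have : (fun n : ℕ => ‖(-1:ℝ)^n * T p y n‖) = T p y := by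
    funext n
    rw [norm_mul, norm_pow, norm_neg, norm_one, one_pow, one_mul,
      Real.norm_eq_abs, abs_of_nonneg (T_nonneg hp hy n)]
  rw [this]
  exact T_summable hp hy

lemma besselJn_eq (p x : ℝ) :
    besselJn p x = ∑' n : ℕ, (-1:ℝ)^n * T p (x^2/4) n := by
  unfold besselJn T
  apply tsum_congr
  intro n
  rw [pow_mul, show (-(1:ℝ)/4) = (-1)/4 by norm_num, div_pow, div_pow]
  ring

/-- alternating series bounds -/
lemma alt_bounds (hp : -1 < p) (hy : 0 ≤ y) (hle : y ≤ p + 1) :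
    0 ≤ ∑' n : ℕ, (-1:ℝ)^n * T p y n ∧ (∑' n : ℕ, (-1:ℝ)^n * T p y n) ≤ 1 ∧
      1 - y/(p+1) ≤ ∑' n : ℕ, (-1:ℝ)^n * T p y n := by
  have hsum := alt_summable hp hy
  have hfl := hsum.hasSum.tendsto_sum_nat
  have hA : Antitone (T p y) := antitone_nat_of_succ_le (T_anti hp hy hle)
  refine ⟨?_, ?_, ?_⟩
  · have := hA.alternating_series_le_tendsto hfl 0
    simpa using this
  · have := hA.tendsto_le_alternating_series hfl 0
    simpa [Finset.sum_range_succ, T_zero hp] using this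
  · have := hA.alternating_series_le_tendsto hfl 1
    simpa [Finset.sum_range_succ, T_zero hp, T_one hp] using this

/-- The key recurrence. -/
lemma rec_id (hp : -1 < p) (x : ℝ) :
    besselJn (p+1) x - besselJn p x
      = (x^2/(4*(p+1)*(p+2))) * besselJn (p+2) x := by
  set y := x^2/4 with hy_def
  have hy : 0 ≤ y := by positivity
  have hp1 : -1 < p + 1 := by linarith
  have hp2 : -1 < p + 2 := by linarith
  have hP1 : (0:ℝ) < p + 1 := by linarith
  have hP2 : (0:ℝ) < p + 2 := by linarith
  rw [besselJn_eq, besselJn_eq, besselJn_eq]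
  rw [← Summable.tsum_sub (alt_summable hp1 hy) (alt_summable hp hy)]
  have hu : Summable (fun n : ℕ => (-1:ℝ)^n * T (p+1) y n - (-1:ℝ)^n * T p y n) :=
    (alt_summable hp1 hy).sub (alt_summable hp hy)
  rw [Summable.tsum_eq_zero_add hu]
  have h0 : (-1:ℝ)^(0:ℕ) * T (p+1) y 0 - (-1:ℝ)^(0:ℕ) * T p y 0 = 0 := by
    simp [T_zero hp1, T_zero hp]
  rw [h0, zero_add]
  have hterm : ∀ n : ℕ,
      (-1:ℝ)^(n+1) * T (p+1) y (n+1) - (-1:ℝ)^(n+1) * T p y (n+1)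
        = (x^2/(4*(p+1)*(p+2))) * ((-1:ℝ)^n * T (p+2) y n) := by
    intro n
    have hA := gamma_pos hp n
    have hG := gamma1_pos hp
    have harg := gamma_arg_pos hp n
    have hfn : (0:ℝ) < n.factorial := by positivity
    have hg1 : Real.Gamma (p + (n:ℝ) + 2) = (p+n+1) * Real.Gamma (p + n + 1) := by
      rw [show p + (n:ℝ) + 2 = (p + n + 1) + 1 by ring, Real.Gamma_add_one harg.ne']
    have hg2 : Real.Gamma (p + (n:ℝ) + 3) = (p+n+2) * ((p+n+1) * Real.Gamma (p + n + 1)) := by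
      rw [show p + (n:ℝ) + 3 = (p + n + 2) + 1 by ring, Real.Gamma_add_one (by linarith [gamma_arg_pos hp n] : p + (n:ℝ) + 2 ≠ 0), hg1]
    have hgp2 : Real.Gamma (p + 2) = (p+1) * Real.Gamma (p+1) := by
      rw [show p + 2 = (p+1) + 1 by ring, Real.Gamma_add_one hP1.ne']
    have hgp3 : Real.Gamma (p + 3) = (p+2) * ((p+1) * Real.Gamma (p+1)) := by
      rw [show p + 3 = (p+2) + 1 by ring, Real.Gamma_add_one hP2.ne', hgp2]
    have e1 : T (p+1) y (n+1)
        = y^(n+1) * ((p+1) * Real.Gamma (p+1)) /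
          ((p+n+2) * ((p+n+1) * Real.Gamma (p + n + 1)) * ((n+1) * n.factorial)) := by
      rw [T_eq hp1]
      rw [show p + 1 + 1 = p + 2 by ring, hgp2]
      rw [show p + 1 + ((n:ℕ)+1:ℕ) + 1 = p + (n:ℝ) + 3 by push_cast; ring, hg2]
      rw [Nat.factorial_succ]
      push_cast
      ring_nf
    have e2 : T p y (n+1)
        = y^(n+1) * Real.Gamma (p+1) /
          ((p+n+1) * Real.Gamma (p + n + 1) * ((n+1) * n.factorial)) := by
      rw [T_eq hp]
      rw [show p + ((n:ℕ)+1:ℕ) + 1 = p + (n:ℝ) + 2 by push_cast; ring, hg1]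
      rw [Nat.factorial_succ]
      push_cast
      ring_nf
    have e3 : T (p+2) y n
        = y^n * ((p+2) * ((p+1) * Real.Gamma (p+1))) /
          ((p+n+2) * ((p+n+1) * Real.Gamma (p + n + 1)) * n.factorial) := by
      rw [T_eq hp2]
      rw [show p + 2 + 1 = p + 3 by ring, hgp3]
      rw [show p + 2 + (n:ℝ) + 1 = p + (n:ℝ) + 3 by ring, hg2]
    rw [e1, e2, e3]
    have hx2 : x^2 = 4 * y := by rw [hy_def]; ring
    rw [hx2]
    have hc1 : p + (n:ℝ) + 1 ≠ 0 := harg.ne'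
    have hc2 : p + (n:ℝ) + 2 ≠ 0 := by have := gamma_arg_pos hp n; intro h; nlinarith
    have hc3 : Real.Gamma (p + n + 1) ≠ 0 := hA.ne'
    have hc4 : Real.Gamma (p + 1) ≠ 0 := hG.ne'
    have hc5 : ((n:ℝ)+1) ≠ 0 := by positivity
    have hc6 : (n.factorial : ℝ) ≠ 0 := hfn.ne'
    rw [pow_succ, pow_succ]
    field_simp
    ring
  calc ∑' n : ℕ, ((-1:ℝ)^(n+1) * T (p+1) y (n+1) - (-1:ℝ)^(n+1) * T p y (n+1))
      = ∑' n : ℕ, (x^2/(4*(p+1)*(p+2))) * ((-1:ℝ)^n * T (p+2) y n) := by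
        exact tsum_congr hterm
    _ = (x^2/(4*(p+1)*(p+2))) * ∑' n : ℕ, (-1:ℝ)^n * T (p+2) y n := tsum_mul_left

/-- relation between `besselJ` and `besselJn` for positive `x`. -/
lemma besselJ_eq (hp : -1 < p) {x : ℝ} (hx : 0 < x) :
    besselJ p x = (x/2)^p / Real.Gamma (p+1) * besselJn p x := by
  have hx2 : (0:ℝ) < x/2 := by linarith
  rw [besselJn_eq]
  rw [← tsum_mul_left]
  unfold besselJ
  apply tsum_congr
  intro n
  have hA := gamma_pos hp n
  have hG := gamma1_pos hp
  have hfn : (0:ℝ) < n.factorial := by positivity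
  rw [T_eq hp]
  have hr : (x/2)^(p + 2*(n:ℝ)) = (x/2)^p * (x^2/4)^n := by
    rw [Real.rpow_add hx2]
    congr 1
    rw [show (2*(n:ℝ)) = ((2*n : ℕ):ℝ) by push_cast; ring, Real.rpow_natCast,
      pow_mul]
    congr 1
    ring
  rw [hr]
  field_simp

lemma besselJn_abs (p x : ℝ) : besselJn p x = besselJn p |x| := by
  unfold besselJn
  apply tsum_congr
  intro n
  rw [pow_mul, pow_mul, sq_abs]

lemma besselJn_ne_zero (hp : -1 < p) {jp1 x : ℝ}
    (hj : IsLeast {x : ℝ | 0 < x ∧ besselJ p x = 0} jp1)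
    (hx0 : 0 < x) (hx : x < jp1) : besselJn p x ≠ 0 := by
  intro h0
  have hbz : besselJ p x = 0 := by
    rw [besselJ_eq hp hx0, h0, mul_zero]
  exact absurd (hj.2 ⟨hx0, hbz⟩) (not_le.mpr hx)

end TuranAux

open TuranAux

theorem turan_bessel (p : ℝ) (hp1 : -1 < p) (hp2 : p < 0) (jp1 : ℝ)
    (hj : IsLeast {x : ℝ | 0 < x ∧ besselJ p x = 0} jp1)
    (x : ℝ) (hx0 : 0 < |x|) (hx : |x| < jp1) :
    besselJn (p+1) x ^ 2 - ((p+1)/(p+2)) * besselJn p x * besselJn (p+2) x > 0 := by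
  have hP1 : (0:ℝ) < p + 1 := by linarith
  have hP2 : (0:ℝ) < p + 2 := by linarith
  set x' := |x| with hx'def
  rw [besselJn_abs p x, besselJn_abs (p+1) x, besselJn_abs (p+2) x]
  set f := besselJn p x' with hf_def
  set g := besselJn (p+1) x' with hg_def
  set h := besselJn (p+2) x' with hh_def
  have hrec : g - f = (x'^2/(4*(p+1)*(p+2))) * h := rec_id hp1 x'
  by_cases hc : x' ≤ p + 1
  · -- small x: alternating series bounds
    set y := x'^2/4 with hy_def
    have hy0 : 0 ≤ y := by positivity
    have hyb : y ≤ (p+1)^2/4 := by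
      have : x'^2 ≤ (p+1)^2 := by nlinarith [abs_nonneg x]
      rw [hy_def]; linarith
    have hp1lt : p + 1 < 1 := by linarith
    have hy14 : y < 1/4 := by nlinarith
    have hylep : y ≤ p + 1 := by nlinarith
    have hylep1 : y ≤ (p+1) + 1 := by linarith
    have hylep2 : y ≤ (p+2) + 1 := by linarith
    have hbf := alt_bounds hp1 hy0 hylep
    have hbg := alt_bounds (by linarith : (-1:ℝ) < p+1) hy0 hylep1
    have hbh := alt_bounds (by linarith : (-1:ℝ) < p+2) hy0 hylep2
    rw [besselJn_eq] at hf_def hg_def hh_def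
    rw [← hy_def] at hf_def hg_def hh_def
    rw [hf_def, hg_def, hh_def]
    obtain ⟨hf0, hf1, -⟩ := hbf
    obtain ⟨-, -, hglow⟩ := hbg
    obtain ⟨hh0, hh1, -⟩ := hbh
    set F := ∑' n : ℕ, (-1:ℝ)^n * T p y n
    set G := ∑' n : ℕ, (-1:ℝ)^n * T (p+1) y n
    set H := ∑' n : ℕ, (-1:ℝ)^n * T (p+2) y n
    have hG34 : 3/4 < G := by
      have hdivle : y/((p+1)+1) ≤ y := by
        apply div_le_self hy0; linarith
      linarith
    have hFH : F * H ≤ 1 := mul_le_one₀ hf1 hh0 hh1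
    have hFH0 : 0 ≤ F * H := mul_nonneg hf0 hh0
    have hr2 : (p+1)/(p+2) < 1/2 := by
      rw [div_lt_iff₀ hP2]; linarith
    have hr0 : 0 ≤ (p+1)/(p+2) := le_of_lt (div_pos hP1 hP2)
    have key : (p+1)/(p+2) * F * H < 1/2 := by
      calc (p+1)/(p+2) * F * H = (p+1)/(p+2) * (F * H) := by ring
        _ ≤ (p+1)/(p+2) * 1 := by
            apply mul_le_mul_of_nonneg_left hFH hr0
        _ < 1/2 := by rw [mul_one]; exact hr2
    nlinarith
  · -- large x: complete the square using the recurrence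
    push_neg at hc
    have hx'0 : 0 < x' := hx0
    have hfne : f ≠ 0 := besselJn_ne_zero hp1 hj hx'0 hx
    have hf2 : 0 < f^2 := pow_two_pos_of_ne_zero hfne
    have hx2 : (p+1)^2 < x'^2 := by nlinarith
    have hx2pos : (0:ℝ) < x'^2 := by positivity
    -- from hrec : h = (g - f) * (4*(p+1)*(p+2)) / x'^2
    have hh : h * x'^2 = (g - f) * (4*(p+1)*(p+2)) := by
      rw [hrec]
      field_simp
    have hkey : ((p+1)/(p+2)) * f * h * x'^2 = 4*(p+1)^2 * f * (g - f) := by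
      have : ((p+1)/(p+2)) * f * (h * x'^2) = ((p+1)/(p+2)) * f * ((g - f) * (4*(p+1)*(p+2))) := by
        rw [hh]
      calc ((p+1)/(p+2)) * f * h * x'^2 = ((p+1)/(p+2)) * f * (h * x'^2) := by ring
        _ = ((p+1)/(p+2)) * f * ((g - f) * (4*(p+1)*(p+2))) := by rw [hh]
        _ = (p+1)/(p+2) * (p+2) * (4*(p+1)) * f * (g-f) := by ring
        _ = 4*(p+1)^2 * f * (g - f) := by
            rw [div_mul_cancel₀ _ hP2.ne']
            ring
    have hsq := sq_nonneg (x'^2 * g - 2*(p+1)^2 * f)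
    have hpos : 0 < 4*(p+1)^2 * (x'^2 - (p+1)^2) * f^2 := by
      apply mul_pos (mul_pos (by positivity) (by linarith)) hf2
    have hmain : (x'^2)^2 * (g^2 - (p+1)/(p+2) * f * h)
        = (x'^2 * g - 2*(p+1)^2 * f)^2 + 4*(p+1)^2 * (x'^2 - (p+1)^2) * f^2 := by
      linear_combination (-(x'^2)) * hkey
    have hBpos : 0 < (x'^2)^2 * (g^2 - (p+1)/(p+2) * f * h) := by
      rw [hmain]; exact add_pos_of_nonneg_of_pos hsq hpos
    have hk : (0:ℝ) < (x'^2)^2 := by positivity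
    have h2 := div_pos hBpos hk
    rwa [mul_div_cancel_left₀ _ hk.ne'] at h2
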